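/- Let I be a set and let B denote the commutative unital Banach algebra of bounded functions I → ℂ with the supremum norm and pointwise operations. (a) For every ultrafilter U on I and every f ∈ B there is a unique complex number λ_U(f) such that f tends to λ_U(f) along U. (b) For every ultrafilter U on I, the map f ↦ λ_U(f) is a unital ℂ-algebra homomorphism B → ℂ. (c) The map U ↦ λ_U is a bijection from the set of ultrafilters on I onto the set of unital ℂ-algebra homomorphisms B → ℂ. -/

import Mathlib

open Filter Topology BoundedContinuousFunction

section Aux

variable {I : Type*} [TopologicalSpace I] [DiscreteTopology I]

/-- The indicator of a set as a bounded function. -/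
noncomputable def indBCF (s : Set I) : I →ᵇ ℂ :=
  ofNormedAddCommGroupDiscrete (Set.indicator s 1) 1 (by
    intro x
    by_cases hx : x ∈ s <;> simp [Set.indicator, hx])

lemma indBCF_apply (s : Set I) (i : I) :
    indBCF s i = Set.indicator s 1 i := rfl

@[simp] lemma indBCF_of_mem {s : Set I} {i : I} (hi : i ∈ s) : indBCF s i = 1 := by
  rw [indBCF_apply]; exact Set.indicator_of_mem hi 1

@[simp] lemma indBCF_of_not_mem {s : Set I} {i : I} (hi : i ∉ s) : indBCF s i = 0 := by
  rw [indBCF_apply]; exact Set.indicator_of_notMem hi 1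

lemma exists_unique_limit (U : Ultrafilter I) (f : I →ᵇ ℂ) :
    ∃! l : ℂ, Tendsto ⇑f ↑U (𝓝 l) := by
  have hc : IsCompact (Metric.closedBall (0 : ℂ) ‖f‖) := isCompact_closedBall _ _
  have hle : ↑(U.map ⇑f) ≤ 𝓟 (Metric.closedBall (0 : ℂ) ‖f‖) := by
    rw [Ultrafilter.coe_map, Filter.le_principal_iff, Filter.mem_map]
    filter_upwards with i
    simpa using f.norm_coe_le_norm i
  obtain ⟨a, -, ha⟩ := hc.ultrafilter_le_nhds (U.map ⇑f) hle
  rw [Ultrafilter.coe_map] at ha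
  exact ⟨a, ha, fun b hb => tendsto_nhds_unique hb ha⟩

noncomputable def ulim (U : Ultrafilter I) (f : I →ᵇ ℂ) : ℂ :=
  (exists_unique_limit U f).exists.choose

lemma tendsto_ulim (U : Ultrafilter I) (f : I →ᵇ ℂ) :
    Tendsto ⇑f ↑U (𝓝 (ulim U f)) :=
  (exists_unique_limit U f).exists.choose_spec

lemma ulim_eq {U : Ultrafilter I} {f : I →ᵇ ℂ} {l : ℂ}
    (h : Tendsto ⇑f ↑U (𝓝 l)) : ulim U f = l :=
  tendsto_nhds_unique (tendsto_ulim U f) h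

/-- The limit functional of an ultrafilter, as an algebra homomorphism. -/
noncomputable def ulimHom (U : Ultrafilter I) : (I →ᵇ ℂ) →ₐ[ℂ] ℂ where
  toFun := ulim U
  map_one' := ulim_eq (by
    have : ⇑(1 : I →ᵇ ℂ) = fun _ : I => (1 : ℂ) := rfl
    rw [this]; exact tendsto_const_nhds)
  map_mul' f g := ulim_eq (by
    have := (tendsto_ulim U f).mul (tendsto_ulim U g)
    exact this)
  map_zero' := ulim_eq (by
    have : ⇑(0 : I →ᵇ ℂ) = fun _ : I => (0 : ℂ) := rfl
    rw [this]; exact tendsto_const_nhds)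
  map_add' f g := ulim_eq (by
    have := (tendsto_ulim U f).add (tendsto_ulim U g)
    exact this)
  commutes' c := ulim_eq (by
    have : ⇑(algebraMap ℂ (I →ᵇ ℂ) c) = fun _ : I => c := rfl
    rw [this]; exact tendsto_const_nhds)

lemma indBCF_mul (s t : Set I) : indBCF s * indBCF t = indBCF (s ∩ t) := by
  ext i
  by_cases hs : i ∈ s <;> by_cases ht : i ∈ t <;> simp [hs, ht]

lemma indBCF_add_compl (s : Set I) : indBCF s + indBCF sᶜ = 1 := by
  ext i
  by_cases hs : i ∈ s <;> simp [hs]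

lemma psi_ind_zero_or_one (ψ : (I →ᵇ ℂ) →ₐ[ℂ] ℂ) (s : Set I) :
    ψ (indBCF s) = 0 ∨ ψ (indBCF s) = 1 := by
  have h : ψ (indBCF s) * ψ (indBCF s) = ψ (indBCF s) := by
    rw [← map_mul, indBCF_mul, Set.inter_self]
  have := mul_self_eq_one_iff (a := ψ (indBCF s))
  rcases eq_or_ne (ψ (indBCF s)) 0 with h0 | h0
  · exact Or.inl h0
  · right
    field_simp at h
    tauto

lemma psi_ind_compl (ψ : (I →ᵇ ℂ) →ₐ[ℂ] ℂ) (s : Set I) :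
    ψ (indBCF s) + ψ (indBCF sᶜ) = 1 := by
  rw [← map_add, indBCF_add_compl, map_one]

/-- The ultrafilter associated to a character. -/
noncomputable def charUlt (ψ : (I →ᵇ ℂ) →ₐ[ℂ] ℂ) : Ultrafilter I :=
  Ultrafilter.ofComplNotMemIff
    { sets := {s | ψ (indBCF s) = 1}
      univ_sets := by
        have : indBCF (Set.univ : Set I) = 1 := by ext i; simp
        simp [this]
      sets_of_superset := by
        intro s t hs hst
        have h1 : indBCF s * indBCF t = indBCF s := by
          rw [indBCF_mul, Set.inter_eq_left.mpr hst]
        have h2 : ψ (indBCF s) * ψ (indBCF t) = ψ (indBCF s) := by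
          rw [← map_mul, h1]
        simp only [Set.mem_setOf_eq] at hs ⊢
        rw [hs, one_mul] at h2
        exact h2
      inter_sets := by
        intro s t hs ht
        simp only [Set.mem_setOf_eq] at hs ht ⊢
        rw [← indBCF_mul, map_mul, hs, ht, one_mul] }
    (by
      intro s
      simp only [Filter.mem_mk, Set.mem_setOf_eq]
      have hc := psi_ind_compl ψ s
      constructor
      · intro h
        rcases psi_ind_zero_or_one ψ sᶜ with h0 | h1
        · rw [h0, add_zero] at hc; exact hc
        · exact absurd h1 h
      · intro h hcompl
        rw [h, hcompl] at hc
        norm_num at hc)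

lemma mem_charUlt (ψ : (I →ᵇ ℂ) →ₐ[ℂ] ℂ) (s : Set I) :
    s ∈ charUlt ψ ↔ ψ (indBCF s) = 1 := Iff.rfl

lemma tendsto_charUlt (ψ : (I →ᵇ ℂ) →ₐ[ℂ] ℂ) (f : I →ᵇ ℂ) :
    Tendsto ⇑f ↑(charUlt ψ) (𝓝 (ψ f)) := by
  rw [Metric.tendsto_nhds]
  intro ε hε
  rw [Filter.eventually_iff]
  set t : Set I := {i | dist (f i) (ψ f) < ε} with ht
  -- suffices to show ψ (indBCF tᶜ) = 0
  have key : ψ (indBCF tᶜ) = 0 := by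
    by_contra h0
    rcases psi_ind_zero_or_one ψ tᶜ with h | h
    · exact h0 h
    -- build a bounded inverse on tᶜ
    set g : I →ᵇ ℂ := f - algebraMap ℂ (I →ᵇ ℂ) (ψ f) with hg
    have hgi : ∀ i, g i = f i - ψ f := fun i => rfl
    set hfun : I → ℂ := fun i => if i ∈ tᶜ then (f i - ψ f)⁻¹ else 0 with hh
    have hbd : ∀ i, ‖hfun i‖ ≤ ε⁻¹ := by
      intro i
      by_cases hi : i ∈ tᶜ
      · simp only [hh, if_pos hi]
        have : ε ≤ ‖f i - ψ f‖ := by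
          have := hi
          simp only [Set.mem_compl_iff, ht, Set.mem_setOf_eq, not_lt] at this
          rwa [dist_eq_norm] at this
        rw [norm_inv]
        exact inv_anti₀ hε this
      · simp only [hh, if_neg hi, norm_zero]
        positivity
    set hb : I →ᵇ ℂ := ofNormedAddCommGroupDiscrete hfun ε⁻¹ hbd with hhb
    have hmul : hb * g = indBCF tᶜ := by
      ext i
      show hfun i * g i = _
      by_cases hi : i ∈ tᶜ
      · have hne : f i - ψ f ≠ 0 := by
          have := hi
          simp only [Set.mem_compl_iff, ht, Set.mem_setOf_eq, not_lt] at this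
          rw [dist_eq_norm] at this
          intro hz
          rw [hz, norm_zero] at this
          linarith
        simp only [hh, if_pos hi, hgi, indBCF_of_mem hi]
        exact inv_mul_cancel₀ hne
      · simp only [hh, if_neg hi, zero_mul, indBCF_of_not_mem hi]
    have := congrArg ψ hmul
    rw [map_mul, h] at this
    have hgz : ψ g = 0 := by
      simp [hg, map_sub, AlgHom.commutes]
    rw [hgz, mul_zero] at this
    norm_num at this
  -- hence t ∈ charUlt ψ
  have hc := psi_ind_compl ψ t
  rw [key, add_zero] at hc
  exact (mem_charUlt ψ t).mpr hc

end Aux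

theorem ultrafilters_biject_with_characters_of_bounded_functions
    {I : Type*} [TopologicalSpace I] [DiscreteTopology I] :
    (∀ (U : Ultrafilter I) (f : I →ᵇ ℂ), ∃! l : ℂ, Tendsto ⇑f ↑U (𝓝 l)) ∧
    (∀ U : Ultrafilter I, ∃ ψ : (I →ᵇ ℂ) →ₐ[ℂ] ℂ,
      ∀ f : I →ᵇ ℂ, Tendsto ⇑f ↑U (𝓝 (ψ f))) ∧
    (∀ ψ : (I →ᵇ ℂ) →ₐ[ℂ] ℂ, ∃! U : Ultrafilter I,
      ∀ f : I →ᵇ ℂ, Tendsto ⇑f ↑U (𝓝 (ψ f))) := by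
  refine ⟨exists_unique_limit, fun U => ⟨ulimHom U, tendsto_ulim U⟩, fun ψ => ?_⟩
  refine ⟨charUlt ψ, tendsto_charUlt ψ, fun V hV => ?_⟩
  -- uniqueness: V = charUlt ψ
  ext s
  rw [mem_charUlt]
  constructor
  · intro hs
    have h1 : Tendsto ⇑(indBCF s) ↑V (𝓝 (1 : ℂ)) := by
      refine Tendsto.congr' ?_ tendsto_const_nhds
      filter_upwards [hs] with i hi
      simp [hi]
    exact tendsto_nhds_unique (hV (indBCF s)) h1
  · intro hs
    by_contra hsV
    have hsc : sᶜ ∈ V := Ultrafilter.compl_mem_iff_notMem.mpr hsV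
    have h0 : Tendsto ⇑(indBCF s) ↑V (𝓝 (0 : ℂ)) := by
      refine Tendsto.congr' ?_ tendsto_const_nhds
      filter_upwards [hsc] with i hi
      simp [Set.notMem_of_mem_compl hi]
    have := tendsto_nhds_unique (hV (indBCF s)) h0
    rw [hs] at this
    norm_num at this
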